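/- arXiv:1709.02999 — 2 statements merged into one kernel-verified Lean document; each statement's English description precedes it below -/
import Mathlib

section
/- If the stepsize satisfies α ≤ (1 + λ_n(Wᵗ))/L, then starting from x_0 = 0 the DGDᵗ iterates satisfy Σ_{i=1}^n f_i(x_{i,k}) ≤ Σ_{i=1}^n f_i(0) for all k ≥ 0, and the concatenated gradient is bounded: ‖∇f(x_k)‖ ≤ D := √(2L Σ_{i=1}^n (f_i(0) − f_i*)) for all k ≥ 1, where f_i* = f_i(x_i*) and x_i* = argmin_x f_i(x). -/
open Finset Filter

noncomputable section

/-- A block `ℝ^p` with the Euclidean norm. -/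
abbrev Vec (p : ℕ) := EuclideanSpace ℝ (Fin p)

/-- The concatenated space `ℝ^{np}` (n blocks of size p) with the Euclidean norm. -/
abbrev CVec (n p : ℕ) := PiLp 2 (fun _ : Fin n => Vec p)

/-- Action of the Kronecker product `W ⊗ I_p` on a concatenated vector of `ℝ^{np}`. -/
def kron {n p : ℕ} (W : Matrix (Fin n) (Fin n) ℝ) (x : CVec n p) : CVec n p :=
  WithLp.toLp 2 (fun i => ∑ j, W i j • x j)

/-- Concatenated gradient `∇f(x) = (∇f₁(x₁); …; ∇fₙ(xₙ))`. -/
def gradConcat {n p : ℕ} (f : Fin n → Vec p → ℝ) (x : CVec n p) : CVec n p :=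
  WithLp.toLp 2 (fun i => gradient (f i) (x i))

section Aux

open RealInnerProductSpace Matrix

/-- Descent lemma: smooth functions are bounded above by quadratics. -/
lemma descent_lemma {p : ℕ} (φ : Vec p → ℝ) (hφ : Differentiable ℝ φ) (K : ℝ) (hK : 0 ≤ K)
    (hLip : LipschitzWith (Real.toNNReal K) (fun z => gradient φ z)) (y d : Vec p) :
    φ (y + d) ≤ φ y + ⟪gradient φ y, d⟫ + K / 2 * ‖d‖ ^ 2 := by
  set c : ℝ := ⟪gradient φ y, d⟫ with hc
  have hder : ∀ s : ℝ, HasDerivAt (fun s : ℝ => φ (y + s • d))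
      ⟪gradient φ (y + s • d), d⟫ s := by
    intro s
    have hline : HasDerivAt (fun s : ℝ => y + s • d) d s := by
      simpa using ((hasDerivAt_id s).smul_const d).const_add y
    have hgrad := (hφ (y + s • d)).hasGradientAt.hasFDerivAt
    have := hgrad.comp_hasDerivAt s hline
    simpa [InnerProductSpace.toDual_apply_apply, Function.comp_def] using this
  set h : ℝ → ℝ := fun s => φ (y + s • d) - s * c - K * ‖d‖ ^ 2 * s ^ 2 / 2 with hh
  have hderh : ∀ s : ℝ, HasDerivAt h
      (⟪gradient φ (y + s • d), d⟫ - c - K * ‖d‖ ^ 2 * s) s := by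
    intro s
    have h2 : HasDerivAt (fun s : ℝ => K * ‖d‖ ^ 2 * s ^ 2 / 2) (K * ‖d‖ ^ 2 * s) s := by
      have := ((hasDerivAt_pow 2 s).const_mul (K * ‖d‖ ^ 2)).div_const 2
      refine this.congr_deriv ?_
      push_cast; ring
    exact ((hder s).sub (hasDerivAt_mul_const c)).sub h2
  have hmono : AntitoneOn h (Set.Icc (0:ℝ) 1) := by
    apply antitoneOn_of_deriv_nonpos (convex_Icc 0 1)
    · exact fun s _ => (hderh s).differentiableAt.continuousAt.continuousWithinAt
    · intro s hs
      exact (hderh s).differentiableAt.differentiableWithinAt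
    · intro s hs
      rw [interior_Icc] at hs
      rw [(hderh s).deriv]
      have hs0 : (0:ℝ) ≤ s := le_of_lt hs.1
      have hlip' : ‖gradient φ (y + s • d) - gradient φ y‖ ≤ K * (s * ‖d‖) := by
        have := hLip.dist_le_mul (y + s • d) y
        rw [dist_eq_norm] at this
        simp only [add_sub_cancel_left, dist_eq_norm] at this
        calc ‖gradient φ (y + s • d) - gradient φ y‖ ≤ K.toNNReal * ‖s • d‖ := by
              simpa [dist_eq_norm] using this
          _ = K * (s * ‖d‖) := by
              rw [norm_smul, Real.coe_toNNReal _ hK, Real.norm_eq_abs, abs_of_nonneg hs0]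
      have hinner : ⟪gradient φ (y + s • d), d⟫ - c ≤ K * ‖d‖ ^ 2 * s := by
        have h1 : ⟪gradient φ (y + s • d), d⟫ - c = ⟪gradient φ (y + s • d) - gradient φ y, d⟫ := by
          rw [hc, inner_sub_left]
        rw [h1]
        calc ⟪gradient φ (y + s • d) - gradient φ y, d⟫
            ≤ ‖gradient φ (y + s • d) - gradient φ y‖ * ‖d‖ := real_inner_le_norm _ _
          _ ≤ K * (s * ‖d‖) * ‖d‖ := by
              apply mul_le_mul_of_nonneg_right hlip' (norm_nonneg d)
          _ = K * ‖d‖ ^ 2 * s := by ring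
      linarith
  have := hmono (Set.mem_Icc.2 ⟨le_refl 0, zero_le_one⟩)
    (Set.mem_Icc.2 ⟨zero_le_one, le_refl 1⟩) zero_le_one
  simp only [hh, zero_smul, add_zero, one_smul, zero_mul, sub_zero, zero_pow, mul_zero,
    zero_div, mul_one, one_pow] at this
  linarith

/-- For an `K`-smooth function bounded below by its value at a global minimizer `ys`,
the squared gradient norm is controlled by the function gap. -/
lemma grad_norm_sq_le {p : ℕ} (φ : Vec p → ℝ) (hφ : Differentiable ℝ φ) (K : ℝ) (hK : 0 < K)
    (hLip : LipschitzWith (Real.toNNReal K) (fun z => gradient φ z)) (ys : Vec p)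
    (hmin : ∀ z, φ ys ≤ φ z) (y : Vec p) :
    ‖gradient φ y‖ ^ 2 ≤ 2 * K * (φ y - φ ys) := by
  have h := descent_lemma φ hφ K hK.le hLip y (-(K⁻¹ • gradient φ y))
  have h2 : ⟪gradient φ y, -(K⁻¹ • gradient φ y)⟫ = -(K⁻¹ * ‖gradient φ y‖ ^ 2) := by
    rw [inner_neg_right, real_inner_smul_right, real_inner_self_eq_norm_sq]
  have h3 : ‖-(K⁻¹ • gradient φ y)‖ ^ 2 = K⁻¹ ^ 2 * ‖gradient φ y‖ ^ 2 := by
    rw [norm_neg, norm_smul, Real.norm_eq_abs, abs_of_nonneg (inv_nonneg.2 hK.le), mul_pow]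
  have h4 := hmin (y + -(K⁻¹ • gradient φ y))
  rw [h2, h3] at h
  set G := ‖gradient φ y‖ ^ 2 with hG
  have hKne : K ≠ 0 := ne_of_gt hK
  have hid : K / 2 * (K⁻¹ ^ 2 * G) = K⁻¹ * G / 2 := by field_simp
  have h7 : K⁻¹ * G / 2 ≤ φ y - φ ys := by linarith [hid]
  have h8 := mul_le_mul_of_nonneg_left h7 (by positivity : (0:ℝ) ≤ 2 * K)
  have h9 : 2 * K * (K⁻¹ * G / 2) = G := by field_simp
  linarith [h8, h9]

/-- Quadratic form of a symmetric doubly stochastic nonnegative matrix is bounded by `‖v‖²`. -/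
lemma quad_le_ds {n : ℕ} (M : Matrix (Fin n) (Fin n) ℝ)
    (hnn : ∀ i j, 0 ≤ M i j) (hrow : ∀ i, ∑ j, M i j = 1) (hcol : ∀ j, ∑ i, M i j = 1)
    (v : Fin n → ℝ) : M.mulVec v ⬝ᵥ v ≤ v ⬝ᵥ v := by
  have key : (0:ℝ) ≤ ∑ i, ∑ j, M i j * (v i - v j) ^ 2 :=
    Finset.sum_nonneg fun i _ => Finset.sum_nonneg fun j _ =>
      mul_nonneg (hnn i j) (sq_nonneg _)
  have e1 : ∑ i, ∑ j, M i j * v i ^ 2 = ∑ i, v i ^ 2 := by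
    refine Finset.sum_congr rfl fun i _ => ?_
    rw [← Finset.sum_mul, hrow i, one_mul]
  have e2 : ∑ i, ∑ j, M i j * v j ^ 2 = ∑ j, v j ^ 2 := by
    rw [Finset.sum_comm]
    refine Finset.sum_congr rfl fun j _ => ?_
    rw [← Finset.sum_mul, hcol j, one_mul]
  have e3 : M.mulVec v ⬝ᵥ v = ∑ i, ∑ j, M i j * v j * v i := by
    simp [Matrix.mulVec, dotProduct, Finset.sum_mul]
  have expand : ∑ i, ∑ j, M i j * (v i - v j) ^ 2
      = (∑ i, ∑ j, M i j * v i ^ 2) + (∑ i, ∑ j, M i j * v j ^ 2)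
        - 2 * (∑ i, ∑ j, M i j * v j * v i) := by
    have hpt : ∀ i j, M i j * (v i - v j) ^ 2
        = M i j * v i ^ 2 + M i j * v j ^ 2 - 2 * (M i j * v j * v i) := fun i j => by ring
    simp only [hpt, Finset.sum_add_distrib, Finset.sum_sub_distrib, ← Finset.mul_sum]
  have e4 : v ⬝ᵥ v = ∑ i, v i ^ 2 := by
    simp [dotProduct, sq]
  rw [e3, e4]
  rw [expand, e1, e2] at key
  linarith

/-- Rayleigh-type lower bound by the smallest eigenvalue. -/
lemma quad_ge_lam {n : ℕ} (M : Matrix (Fin n) (Fin n) ℝ) (hM : M.IsHermitian)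
    (lam : ℝ) (hlb : ∀ i, lam ≤ hM.eigenvalues i) (v : Fin n → ℝ) :
    lam * (v ⬝ᵥ v) ≤ M.mulVec v ⬝ᵥ v := by
  classical
  set b := hM.eigenvectorBasis with hb
  have hip : ∀ a c : EuclideanSpace ℝ (Fin n), ⟪a, c⟫ = (a : Fin n → ℝ) ⬝ᵥ (c : Fin n → ℝ) := by
    intro a c
    simp [PiLp.inner_apply, RCLike.inner_apply, dotProduct, mul_comm]
  have hMt : Mᵀ = M := hM
  have hsym : ∀ w : Fin n → ℝ, M.mulVec v ⬝ᵥ w = v ⬝ᵥ M.mulVec w := by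
    intro w
    rw [← hMt, Matrix.mulVec_transpose, ← Matrix.dotProduct_mulVec, hMt,
      dotProduct_comm]
  have hMb : ∀ j, M.mulVec (b j)
      = hM.eigenvalues j • ((b j : EuclideanSpace ℝ (Fin n)) : Fin n → ℝ) := by
    intro j
    have := hM.mulVec_eigenvectorBasis j
    simpa using this
  set u : EuclideanSpace ℝ (Fin n) := (WithLp.equiv 2 (Fin n → ℝ)).symm v with hu
  set Mu : EuclideanSpace ℝ (Fin n) := (WithLp.equiv 2 (Fin n → ℝ)).symm (M.mulVec v) with hMu
  have hparse1 : M.mulVec v ⬝ᵥ v = ∑ j, (hM.eigenvalues j) * ⟪u, b j⟫ ^ 2 := by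
    have h0 : M.mulVec v ⬝ᵥ v = ⟪Mu, u⟫ := by rw [hip]; rfl
    rw [h0, ← b.sum_inner_mul_inner Mu u]
    refine Finset.sum_congr rfl fun j _ => ?_
    have h1 : ⟪Mu, b j⟫ = hM.eigenvalues j * ⟪u, b j⟫ := by
      rw [hip, hip]
      show M.mulVec v ⬝ᵥ (b j : Fin n → ℝ) = _
      rw [hsym, hMb j, dotProduct_smul]
      rfl
    rw [h1, real_inner_comm (b j) u]
    ring
  have hparse2 : v ⬝ᵥ v = ∑ j, ⟪u, b j⟫ ^ 2 := by
    have h0 : v ⬝ᵥ v = ⟪u, u⟫ := by rw [hip]; rfl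
    rw [h0, ← b.sum_inner_mul_inner u u]
    refine Finset.sum_congr rfl fun j _ => ?_
    rw [real_inner_comm (b j) u]; ring
  rw [hparse1, hparse2, Finset.mul_sum]
  refine Finset.sum_le_sum fun j _ => ?_
  exact mul_le_mul_of_nonneg_right (hlb j) (sq_nonneg _)

lemma vec_sum_apply {p : ℕ} {ι : Type*} (s : Finset ι) (g : ι → Vec p) (l : Fin p) :
    (∑ j ∈ s, g j) l = ∑ j ∈ s, g j l := by
  classical
  induction s using Finset.induction with
  | empty => rfl
  | insert _ _ hj ih =>
      rw [Finset.sum_insert hj, Finset.sum_insert hj, ← ih]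
      rfl

lemma cvec_inner_eq {n p : ℕ} (x y : CVec n p) :
    ⟪x, y⟫ = ∑ l : Fin p, (fun j => x j l) ⬝ᵥ (fun i => y i l) := by
  simp only [PiLp.inner_apply, RCLike.inner_apply, conj_trivial, dotProduct]
  rw [Finset.sum_comm]
  simp only [mul_comm]

lemma kron_inner_eq {n p : ℕ} (M : Matrix (Fin n) (Fin n) ℝ) (x y : CVec n p) :
    ⟪kron M x, y⟫ = ∑ l : Fin p, (M.mulVec fun j => x j l) ⬝ᵥ (fun i => y i l) := by
  simp only [PiLp.inner_apply, RCLike.inner_apply, conj_trivial, kron, Matrix.mulVec,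
    dotProduct, Finset.sum_mul]
  have happ : ∀ (i : Fin n) (l : Fin p), (∑ j, M i j • x j) l = ∑ j, M i j * x j l := by
    intro i l
    rw [vec_sum_apply]
    rfl
  simp only [happ, Finset.sum_mul]
  rw [Finset.sum_comm]
  simp only [Finset.mul_sum]
  exact Finset.sum_congr rfl fun _ _ => Finset.sum_congr rfl fun _ _ =>
    Finset.sum_congr rfl fun _ _ => by ring

lemma kron_add {n p : ℕ} (M : Matrix (Fin n) (Fin n) ℝ) (x y : CVec n p) :
    kron M (x + y) = kron M x + kron M y := by
  refine PiLp.ext fun i => ?_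
  simp only [kron, PiLp.add_apply, smul_add, Finset.sum_add_distrib, PiLp.toLp_apply]

end Aux

open RealInnerProductSpace Matrix in
/-- if `α ≤ (1 + λₙ(Wᵗ))/L`, then starting from `x₀ = 0` the DGDᵗ iterates
satisfy `∑ᵢ fᵢ(x_{i,k}) ≤ ∑ᵢ fᵢ(0)` for all `k ≥ 0`, and the concatenated gradient is
bounded: `‖∇f(x_k)‖ ≤ D = √(2L ∑ᵢ (fᵢ(0) − fᵢ*))` for all `k ≥ 1`. -/
theorem dgdt_bounded_gradients
    (n p t : ℕ) (hn : 1 ≤ n) (hp : 1 ≤ p) (ht : 1 ≤ t)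
    -- local objective functions: convex, differentiable, with Lᵢ-Lipschitz gradients
    (f : Fin n → Vec p → ℝ) (Lc : Fin n → ℝ) (L : ℝ)
    (hconv : ∀ i, ConvexOn ℝ Set.univ (f i))
    (hdiff : ∀ i, Differentiable ℝ (f i))
    (hLpos : ∀ i, 0 < Lc i)
    (hLip : ∀ i, LipschitzWith (Real.toNNReal (Lc i)) (fun z => gradient (f i) z))
    (hLmax : IsGreatest (Set.range Lc) L)
    -- each fᵢ attains its minimum at xsᵢ
    (xs : Fin n → Vec p) (hxs : ∀ i, ∀ z, f i (xs i) ≤ f i z)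
    -- W is symmetric, doubly stochastic, with eigenvalues in (−1, 1]
    (W : Matrix (Fin n) (Fin n) ℝ) (hWsymm : W.IsHermitian)
    (hrow : ∀ i, ∑ j, W i j = 1) (hcol : ∀ j, ∑ i, W i j = 1)
    (hWnn : ∀ i j, 0 ≤ W i j)
    (heig : ∀ i, hWsymm.eigenvalues i ∈ Set.Ioc (-1 : ℝ) 1)
    -- λₙ(Wᵗ): the smallest eigenvalue of Wᵗ
    (hWt : (W ^ t).IsHermitian)
    (lam : ℝ) (hlam : IsLeast (Set.range hWt.eigenvalues) lam)
    -- stepsize condition α ≤ (1 + λₙ(Wᵗ))/L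
    (α : ℝ) (hα : 0 < α) (hαle : α ≤ (1 + lam) / L)
    -- DGDᵗ iterates starting from x₀ = 0
    (x : ℕ → CVec n p) (hx0 : x 0 = 0)
    (hiter : ∀ k, x (k + 1) = kron (W ^ t) (x k) - α • gradConcat f (x k))
    -- the gradient bound D
    (D : ℝ) (hD : D = Real.sqrt (2 * L * ∑ i, (f i 0 - f i (xs i)))) :
    (∀ k, ∑ i, f i (x k i) ≤ ∑ i, f i 0) ∧
    (∀ k, 1 ≤ k → ‖gradConcat f (x k)‖ ≤ D) := by
  classical
  obtain ⟨i₀, hi₀⟩ := hLmax.1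
  have hL0 : 0 < L := hi₀ ▸ hLpos i₀
  have hαL : α * L ≤ 1 + lam := (le_div_iff₀ hL0).mp hαle
  have hlb : ∀ i, lam ≤ hWt.eigenvalues i := fun i => hlam.2 ⟨i, rfl⟩
  -- doubly stochastic properties of W ^ t
  have pow_nn : ∀ s : ℕ, ∀ i j, 0 ≤ (W ^ s) i j := by
    intro s
    induction s with
    | zero =>
        intro i j
        rw [pow_zero, Matrix.one_apply]
        split <;> norm_num
    | succ s ih =>
        intro i j
        rw [pow_succ, Matrix.mul_apply]
        exact Finset.sum_nonneg fun k _ => mul_nonneg (ih i k) (hWnn k j)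
  have pow_row : ∀ s : ℕ, ∀ i, ∑ j, (W ^ s) i j = 1 := by
    intro s
    induction s with
    | zero => intro i; simp [Matrix.one_apply]
    | succ s ih =>
        intro i
        simp only [pow_succ, Matrix.mul_apply]
        rw [Finset.sum_comm]
        have hk : ∀ k, ∑ j, (W ^ s) i k * W k j = (W ^ s) i k := fun k => by
          rw [← Finset.mul_sum, hrow k, mul_one]
        simp only [hk]
        exact ih i
  have pow_col : ∀ s : ℕ, ∀ j, ∑ i, (W ^ s) i j = 1 := by
    intro s
    induction s with
    | zero => intro j; simp [Matrix.one_apply]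
    | succ s ih =>
        intro j
        simp only [pow_succ, Matrix.mul_apply]
        rw [Finset.sum_comm]
        have hk : ∀ k, ∑ i, (W ^ s) i k * W k j = W k j := fun k => by
          rw [← Finset.sum_mul, ih k, one_mul]
        simp only [hk]
        exact hcol j
  have hMsym : (W ^ t)ᵀ = W ^ t := hWt
  -- CVec-level quadratic form facts
  have hq_le : ∀ z : CVec n p, ⟪kron (W ^ t) z, z⟫ ≤ ⟪z, z⟫ := by
    intro z
    rw [kron_inner_eq, cvec_inner_eq]
    exact Finset.sum_le_sum fun l _ =>
      quad_le_ds (W ^ t) (pow_nn t) (pow_row t) (pow_col t) _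
  have hq_ge : ∀ z : CVec n p, lam * ⟪z, z⟫ ≤ ⟪kron (W ^ t) z, z⟫ := by
    intro z
    rw [kron_inner_eq, cvec_inner_eq, Finset.mul_sum]
    exact Finset.sum_le_sum fun l _ => quad_ge_lam (W ^ t) hWt lam hlb _
  have hsym : ∀ z d : CVec n p, ⟪kron (W ^ t) z, d⟫ = ⟪z, kron (W ^ t) d⟫ := by
    intro z d
    calc ⟪kron (W ^ t) z, d⟫
        = ∑ l : Fin p, ((W ^ t).mulVec fun j => z j l) ⬝ᵥ (fun i => d i l) :=
          kron_inner_eq _ _ _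
      _ = ∑ l : Fin p, ((W ^ t).mulVec fun i => d i l) ⬝ᵥ (fun j => z j l) := by
          refine Finset.sum_congr rfl fun l _ => ?_
          calc ((W ^ t).mulVec fun j => z j l) ⬝ᵥ (fun i => d i l)
              = (fun i => d i l) ⬝ᵥ ((W ^ t).mulVec fun j => z j l) :=
                dotProduct_comm _ _
            _ = ((fun i => d i l) ᵥ* (W ^ t)) ⬝ᵥ (fun j => z j l) :=
                Matrix.dotProduct_mulVec _ _ _
            _ = ((W ^ t)ᵀ.mulVec fun i => d i l) ⬝ᵥ (fun j => z j l) := by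
                rw [Matrix.mulVec_transpose]
            _ = ((W ^ t).mulVec fun i => d i l) ⬝ᵥ (fun j => z j l) := by rw [hMsym]
      _ = ⟪kron (W ^ t) d, z⟫ := (kron_inner_eq _ _ _).symm
      _ = ⟪z, kron (W ^ t) d⟫ := real_inner_comm _ _
  -- the Lyapunov function
  set Fv : CVec n p → ℝ := fun z => ∑ i, f i (z i) with hFv
  set Qv : CVec n p → ℝ := fun z => ⟪z, z⟫ - ⟪kron (W ^ t) z, z⟫ with hQv
  set ξ : CVec n p → ℝ := fun z => Fv z + 1 / (2 * α) * Qv z with hξ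
  have hQnn : ∀ z, 0 ≤ Qv z := fun z => sub_nonneg.2 (hq_le z)
  have hQ0 : Qv 0 = 0 := by simp [hQv]
  -- descent step for ξ
  have hstep : ∀ k, ξ (x (k + 1)) ≤ ξ (x k) := by
    intro k
    set z := x k with hz
    set g : CVec n p := gradConcat f z with hg
    set d : CVec n p := x (k + 1) - z with hd
    have hx1 : x (k + 1) = z + d := by rw [hd]; abel
    have hdval : d = kron (W ^ t) z - α • g - z := by
      rw [hd, hiter k]
    have hF : Fv (z + d) ≤ Fv z + ⟪g, d⟫ + L / 2 * ⟪d, d⟫ := by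
      have hblock : ∀ i, f i ((z + d) i)
          ≤ f i (z i) + ⟪g i, d i⟫ + Lc i / 2 * ‖d i‖ ^ 2 := by
        intro i
        have := descent_lemma (f i) (hdiff i) (Lc i) (hLpos i).le (hLip i) (z i) (d i)
        exact this
      have h1 : ∑ i, ⟪g i, d i⟫ = ⟪g, d⟫ := (PiLp.inner_apply g d).symm
      have h3 : ⟪d, d⟫ = ∑ i, ‖d i‖ ^ 2 := by
        rw [PiLp.inner_apply]
        exact Finset.sum_congr rfl fun i _ => real_inner_self_eq_norm_sq _
      have h2 : ∑ i, Lc i / 2 * ‖d i‖ ^ 2 ≤ L / 2 * ∑ i, ‖d i‖ ^ 2 := by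
        rw [Finset.mul_sum]
        refine Finset.sum_le_sum fun i _ => ?_
        have h3 : Lc i ≤ L := hLmax.2 ⟨i, rfl⟩
        exact mul_le_mul_of_nonneg_right (by linarith) (sq_nonneg _)
      calc Fv (z + d) = ∑ i, f i ((z + d) i) := rfl
        _ ≤ ∑ i, (f i (z i) + ⟪g i, d i⟫ + Lc i / 2 * ‖d i‖ ^ 2) :=
            Finset.sum_le_sum fun i _ => hblock i
        _ = (∑ i, f i (z i)) + (∑ i, ⟪g i, d i⟫) + ∑ i, Lc i / 2 * ‖d i‖ ^ 2 := by
            rw [Finset.sum_add_distrib, Finset.sum_add_distrib]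
        _ ≤ Fv z + ⟪g, d⟫ + L / 2 * ⟪d, d⟫ := by
            rw [h1, h3]
            exact add_le_add_right h2 _
    have hQexp : Qv (z + d) = Qv z + 2 * (⟪z, d⟫ - ⟪kron (W ^ t) z, d⟫) + Qv d := by
      have e1 : ⟪z + d, z + d⟫ = ⟪z, z⟫ + 2 * ⟪z, d⟫ + ⟪d, d⟫ := real_inner_add_add_self z d
      have e2 : ⟪kron (W ^ t) (z + d), z + d⟫
          = ⟪kron (W ^ t) z, z⟫ + 2 * ⟪kron (W ^ t) z, d⟫ + ⟪kron (W ^ t) d, d⟫ := by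
        rw [kron_add, inner_add_left, inner_add_right, inner_add_right]
        have e3 : ⟪kron (W ^ t) d, z⟫ = ⟪kron (W ^ t) z, d⟫ := by
          rw [hsym d z, real_inner_comm]
        rw [e3]; ring
      simp only [hQv]
      rw [e1, e2]; ring
    set t1 := ⟪g, d⟫ with ht1
    set t2 := ⟪z, d⟫ - ⟪kron (W ^ t) z, d⟫ with ht2
    set N := ⟪d, d⟫ with hN
    have hNnn : (0:ℝ) ≤ N := real_inner_self_nonneg
    have hrel : N = -t2 - α * t1 := by
      have : N = ⟪kron (W ^ t) z - α • g - z, d⟫ := by rw [hN, ← hdval]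
      rw [this, inner_sub_left, inner_sub_left, real_inner_smul_left]
      simp only [ht1, ht2]; ring
    have hQd : Qv d ≤ (1 - lam) * N := by
      have := hq_ge d
      simp only [hQv, hN] at *
      linarith
    have hchain : ξ (x (k + 1)) ≤ ξ z + (t1 + (1 / α) * t2) + L / 2 * N + 1 / (2 * α) * Qv d := by
      rw [hx1]
      simp only [hξ]
      rw [hQexp]
      have e : 1 / (2 * α) * (Qv z + 2 * t2 + Qv d)
          = 1 / (2 * α) * Qv z + (1 / α) * t2 + 1 / (2 * α) * Qv d := by
        field_simp
      rw [e]
      linarith [hF]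
    have hfinal : (t1 + (1 / α) * t2) + L / 2 * N + 1 / (2 * α) * Qv d ≤ 0 := by
      have hαne : α ≠ 0 := ne_of_gt hα
      have e1 : t1 + (1 / α) * t2 = -(N / α) := by
        have h : t2 = -N - α * t1 := by linarith [hrel]
        rw [h]; field_simp; ring
      have e2 : 1 / (2 * α) * Qv d ≤ 1 / (2 * α) * ((1 - lam) * N) :=
        mul_le_mul_of_nonneg_left hQd (by positivity)
      have e3 : -(N / α) + L / 2 * N + 1 / (2 * α) * ((1 - lam) * N)
          = (α * L - (1 + lam)) * N / (2 * α) := by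
        field_simp; ring
      have e4 : (α * L - (1 + lam)) * N / (2 * α) ≤ 0 :=
        div_nonpos_of_nonpos_of_nonneg
          (mul_nonpos_of_nonpos_of_nonneg (by linarith) hNnn) (by positivity)
      rw [e1]
      calc -(N / α) + L / 2 * N + 1 / (2 * α) * Qv d
          ≤ -(N / α) + L / 2 * N + 1 / (2 * α) * ((1 - lam) * N) := add_le_add_right e2 _
        _ = (α * L - (1 + lam)) * N / (2 * α) := e3
        _ ≤ 0 := e4
    clear_value Fv Qv ξ z g d t1 t2 N
    linarith [hchain, hfinal]
  have hxi : ∀ k, ξ (x k) ≤ ∑ i, f i 0 := by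
    intro k
    induction k with
    | zero =>
        rw [hx0]
        simp only [hξ, hQ0, mul_zero, add_zero]
        exact le_refl _
    | succ k ih => exact le_trans (hstep k) ih
  have part1 : ∀ k, ∑ i, f i (x k i) ≤ ∑ i, f i 0 := by
    intro k
    have h0 : 0 ≤ 1 / (2 * α) * Qv (x k) := mul_nonneg (by positivity) (hQnn _)
    have h1 : Fv (x k) ≤ ξ (x k) := by simp only [hξ]; linarith
    exact le_trans h1 (hxi k)
  refine ⟨part1, fun k _ => ?_⟩
  set G := gradConcat f (x k) with hG
  have hGsq : ‖G‖ ^ 2 = ∑ i, ‖G i‖ ^ 2 := by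
    rw [← real_inner_self_eq_norm_sq, PiLp.inner_apply]
    exact Finset.sum_congr rfl fun i _ => real_inner_self_eq_norm_sq _
  have hblock : ∀ i, ‖G i‖ ^ 2 ≤ 2 * Lc i * (f i (x k i) - f i (xs i)) := fun i =>
    grad_norm_sq_le (f i) (hdiff i) (Lc i) (hLpos i) (hLip i) (xs i) (hxs i) (x k i)
  have hsum : ‖G‖ ^ 2 ≤ 2 * L * ∑ i, (f i 0 - f i (xs i)) := by
    rw [hGsq]
    calc ∑ i, ‖G i‖ ^ 2 ≤ ∑ i, 2 * L * (f i (x k i) - f i (xs i)) := by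
          refine Finset.sum_le_sum fun i _ => ?_
          have h1 := hblock i
          have h2 : (0:ℝ) ≤ f i (x k i) - f i (xs i) := sub_nonneg.2 (hxs i _)
          have h3 : Lc i ≤ L := hLmax.2 ⟨i, rfl⟩
          nlinarith
      _ = 2 * L * ∑ i, (f i (x k i) - f i (xs i)) := by rw [Finset.mul_sum]
      _ ≤ 2 * L * ∑ i, (f i 0 - f i (xs i)) := by
          refine mul_le_mul_of_nonneg_left ?_ (by positivity)
          rw [Finset.sum_sub_distrib, Finset.sum_sub_distrib]
          exact sub_le_sub_right (part1 k) _
  rw [hD]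
  calc ‖G‖ = Real.sqrt (‖G‖ ^ 2) := (Real.sqrt_sq (norm_nonneg G)).symm
    _ ≤ Real.sqrt (2 * L * ∑ i, (f i 0 - f i (xs i))) := Real.sqrt_le_sqrt hsum
end
end

section
/- If α ≤ (1 + λ_n(Wᵗ))/L and x_0 = 0, then ‖∇f(x_k)‖ ≤ D for all k implies that each agent's DGDᵗ iterate deviates boundedly from the mean: ‖x_{i,k} − x̄_k‖ ≤ αD/(1 − βᵗ) for all k ≥ 1 and all i = 1,…,n, where x̄_k = (1/n) Σ_{i=1}^n x_{i,k} and D = √(2L Σ_{i=1}^n (f_i(0) − f_i*)). -/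
open Finset Filter

noncomputable section

section Aux

open scoped RealInnerProductSpace

/-- Cast a plain function into Euclidean space. -/
def toE {n : ℕ} (v : Fin n → ℝ) : EuclideanSpace ℝ (Fin n) := (WithLp.equiv 2 _).symm v

@[simp] lemma toE_apply {n : ℕ} (v : Fin n → ℝ) (i : Fin n) : toE v i = v i := rfl

lemma euclid_inner {n : ℕ} (x y : EuclideanSpace ℝ (Fin n)) : ⟪x, y⟫ = ∑ i, x i * y i := by
  simp [PiLp.inner_apply]
  exact Finset.sum_congr rfl fun _ _ => mul_comm _ _

lemma mulVec_norm_le {n : ℕ} (W : Matrix (Fin n) (Fin n) ℝ) (hW : W.IsHermitian)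
    (hrow : ∀ i, ∑ j, W i j = 1)
    (β : ℝ) (hβ0 : 0 ≤ β)
    (hone : ∃! i, hW.eigenvalues i = 1)
    (hβub : ∀ i, hW.eigenvalues i ≠ 1 → |hW.eigenvalues i| ≤ β)
    (v : EuclideanSpace ℝ (Fin n)) (hv : ∑ i, v i = 0) :
    ‖toE (W.mulVec v)‖ ≤ β * ‖v‖ := by
  classical
  set b := hW.eigenvectorBasis with hb
  set lam := hW.eigenvalues with hlam
  obtain ⟨i₀, hi₀, huniq⟩ := hone
  have hsymm : ∀ a c, W a c = W c a := by
    intro a c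
    have := congrFun (congrFun hW c) a
    simpa [Matrix.conjTranspose_apply] using this
  have key : ∀ (y : EuclideanSpace ℝ (Fin n)) (i : Fin n),
      b.repr (toE (W.mulVec y)) i = lam i * b.repr y i := by
    intro y i
    rw [b.repr_apply_apply, b.repr_apply_apply]
    have h1 : ⟪b i, toE (W.mulVec y)⟫ = ⟪toE (W.mulVec (b i)), y⟫ := by
      rw [euclid_inner, euclid_inner]
      simp only [toE_apply, Matrix.mulVec, dotProduct]
      calc ∑ a, b i a * ∑ c, W a c * y c
          = ∑ a, ∑ c, b i a * (W a c * y c) := by simp_rw [Finset.mul_sum]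
        _ = ∑ c, ∑ a, b i a * (W a c * y c) := Finset.sum_comm
        _ = ∑ c, (∑ a, W c a * b i a) * y c := by
            refine Finset.sum_congr rfl fun c _ => ?_
            rw [Finset.sum_mul]
            refine Finset.sum_congr rfl fun a _ => ?_
            rw [hsymm c a]; ring
    rw [h1]
    have h2 : toE (W.mulVec (b i)) = lam i • b i := by
      have := hW.mulVec_eigenvectorBasis i
      rw [← hb, ← hlam] at this
      rw [this]; rfl
    rw [h2, real_inner_smul_left]
  set ones : EuclideanSpace ℝ (Fin n) := toE (fun _ => (1 : ℝ)) with hones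
  have hWones : toE (W.mulVec ones) = ones := by
    ext i
    simp [Matrix.mulVec, dotProduct, hones, hrow i]
  have hcoef : ∀ i, i ≠ i₀ → b.repr ones i = 0 := by
    intro i hi
    have h := key ones i
    rw [hWones] at h
    have hne : lam i ≠ 1 := fun hc => hi (huniq i hc)
    have : (lam i - 1) * b.repr ones i = 0 := by linarith [h]
    rcases mul_eq_zero.1 this with h' | h'
    · exact absurd (by linarith) hne
    · exact h'
  have hdecomp : ones = b.repr ones i₀ • b i₀ := by
    have hsum := b.sum_repr ones
    rw [Finset.sum_eq_single i₀ (fun j _ hj => by rw [hcoef j hj, zero_smul])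
      (fun h => absurd (Finset.mem_univ i₀) h)] at hsum
    exact hsum.symm
  have hc0ne : b.repr ones i₀ ≠ 0 := by
    intro hc
    rw [hc, zero_smul] at hdecomp
    have h1 : (ones : EuclideanSpace ℝ (Fin n)) i₀ = 0 := by rw [hdecomp]; rfl
    simp [hones] at h1
  have hv0 : b.repr v i₀ = 0 := by
    have hiv : ⟪ones, v⟫ = 0 := by
      rw [euclid_inner]; simpa [hones] using hv
    rw [hdecomp, real_inner_smul_left, ← b.repr_apply_apply] at hiv
    exact (mul_eq_zero.1 hiv).resolve_left hc0ne
  have hnorm : ∀ y : EuclideanSpace ℝ (Fin n), ‖y‖ ^ 2 = ∑ i, (b.repr y i) ^ 2 := by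
    intro y
    rw [← b.repr.norm_map y, PiLp.norm_sq_eq_of_L2]
    simp [sq_abs]
  have hsq : ‖toE (W.mulVec v)‖ ^ 2 ≤ (β * ‖v‖) ^ 2 := by
    rw [hnorm, mul_pow, hnorm v, Finset.mul_sum]
    refine Finset.sum_le_sum fun i _ => ?_
    rw [key v i, mul_pow]
    by_cases hi : i = i₀
    · subst hi; rw [hv0]; simp
    · have hab := hβub i (fun hc => hi (huniq i hc))
      have h2 : lam i ^ 2 ≤ β ^ 2 := by
        rw [← sq_abs (lam i)]
        exact pow_le_pow_left₀ (abs_nonneg _) hab 2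
      nlinarith [sq_nonneg (b.repr v i)]
  have h1 : 0 ≤ β * ‖v‖ := mul_nonneg hβ0 (norm_nonneg _)
  nlinarith [norm_nonneg (toE (W.mulVec v)), hsq, h1]

/-- block evaluation as an additive hom -/
def evC {n p : ℕ} (i : Fin n) : CVec n p →+ Vec p where
  toFun v := v i
  map_zero' := rfl
  map_add' _ _ := rfl

def evV {p : ℕ} (c : Fin p) : Vec p →+ ℝ where
  toFun v := v c
  map_zero' := rfl
  map_add' _ _ := rfl

lemma sumC_apply {n p : ℕ} {ι : Type*} (s : Finset ι) (f : ι → CVec n p) (i : Fin n) :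
    (∑ j ∈ s, f j) i = ∑ j ∈ s, f j i := map_sum (evC i) f s

lemma sumV_apply {p : ℕ} {ι : Type*} (s : Finset ι) (f : ι → Vec p) (c : Fin p) :
    (∑ j ∈ s, f j) c = ∑ j ∈ s, f j c := map_sum (evV c) f s

lemma vec_norm_sq {p : ℕ} (y : Vec p) : ‖y‖ ^ 2 = ∑ c, (y c) ^ 2 := by
  rw [PiLp.norm_sq_eq_of_L2]; simp [sq_abs]

lemma cvec_norm_sq {n p : ℕ} (x : CVec n p) : ‖x‖ ^ 2 = ∑ i, ∑ c, (x i c) ^ 2 := by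
  rw [PiLp.norm_sq_eq_of_L2]
  exact Finset.sum_congr rfl fun i _ => vec_norm_sq (x i)

lemma coord_le_norm {n p : ℕ} (x : CVec n p) (i : Fin n) : ‖x i‖ ≤ ‖x‖ := by
  have h : ‖x i‖ ^ 2 ≤ ‖x‖ ^ 2 := by
    rw [vec_norm_sq, cvec_norm_sq]
    exact Finset.single_le_sum (f := fun j => ∑ c, (x j c) ^ 2)
      (fun j _ => by positivity) (Finset.mem_univ i)
  nlinarith [norm_nonneg (x i), norm_nonneg x]

lemma kron_apply_coord {n p : ℕ} (W : Matrix (Fin n) (Fin n) ℝ) (x : CVec n p)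
    (i : Fin n) (c : Fin p) : kron W x i c = W.mulVec (fun j => x j c) i := by
  show (∑ j, W i j • x j) c = _
  rw [sumV_apply]
  simp [Matrix.mulVec, dotProduct]

lemma kron_mul {n p : ℕ} (A B : Matrix (Fin n) (Fin n) ℝ) (x : CVec n p) :
    kron (A * B) x = kron A (kron B x) := by
  refine PiLp.ext fun i => ?_
  show ∑ j, (A * B) i j • x j = ∑ l, A i l • ∑ j, B l j • x j
  simp_rw [Matrix.mul_apply, Finset.sum_smul, Finset.smul_sum, smul_smul]
  exact Finset.sum_comm

lemma kron_one {n p : ℕ} (x : CVec n p) : kron (1 : Matrix (Fin n) (Fin n) ℝ) x = x := by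
  refine PiLp.ext fun i => ?_
  show ∑ j, (1 : Matrix (Fin n) (Fin n) ℝ) i j • x j = x i
  simp [Matrix.one_apply, ite_smul]

lemma kron_norm_le {n p : ℕ} (W : Matrix (Fin n) (Fin n) ℝ) (hW : W.IsHermitian)
    (hrow : ∀ i, ∑ j, W i j = 1) (β : ℝ) (hβ0 : 0 ≤ β)
    (hone : ∃! i, hW.eigenvalues i = 1)
    (hβub : ∀ i, hW.eigenvalues i ≠ 1 → |hW.eigenvalues i| ≤ β)
    (x : CVec n p) (hx : ∀ c, ∑ i, x i c = 0) :
    ‖kron W x‖ ≤ β * ‖x‖ := by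
  have hsq : ‖kron W x‖ ^ 2 ≤ (β * ‖x‖) ^ 2 := by
    rw [cvec_norm_sq, mul_pow, cvec_norm_sq, Finset.mul_sum]
    calc ∑ i, ∑ c, (kron W x i c) ^ 2
        = ∑ c, ∑ i, (kron W x i c) ^ 2 := Finset.sum_comm
      _ ≤ ∑ c, ∑ i, β ^ 2 * (x i c) ^ 2 := by
          refine Finset.sum_le_sum fun c _ => ?_
          have hm := mulVec_norm_le W hW hrow β hβ0 hone hβub (toE fun j => x j c)
            (by simpa using hx c)
          have hm2 := pow_le_pow_left₀ (norm_nonneg _) hm 2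
          rw [vec_norm_sq, mul_pow, vec_norm_sq] at hm2
          simp only [toE_apply] at hm2
          calc ∑ i, (kron W x i c) ^ 2
              = ∑ i, (W.mulVec (fun j => x j c) i) ^ 2 := by
                refine Finset.sum_congr rfl fun i _ => ?_
                rw [kron_apply_coord]
            _ ≤ β ^ 2 * ∑ i, (x i c) ^ 2 := hm2
            _ = ∑ i, β ^ 2 * (x i c) ^ 2 := Finset.mul_sum _ _ _
      _ = ∑ i, ∑ c, β ^ 2 * (x i c) ^ 2 := Finset.sum_comm
      _ = ∑ i, β ^ 2 * ∑ c, (x i c) ^ 2 := by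
          exact Finset.sum_congr rfl fun i _ => (Finset.mul_sum _ _ _).symm
  nlinarith [norm_nonneg (kron W x), mul_nonneg hβ0 (norm_nonneg x)]

lemma kron_sum_zero {n p : ℕ} (W : Matrix (Fin n) (Fin n) ℝ)
    (hcol : ∀ j, ∑ i, W i j = 1) (x : CVec n p) (hx : ∀ c, ∑ i, x i c = 0) :
    ∀ c, ∑ i, kron W x i c = 0 := by
  intro c
  calc ∑ i, kron W x i c = ∑ i, ∑ j, W i j * x j c := by
        refine Finset.sum_congr rfl fun i _ => ?_
        rw [kron_apply_coord]; simp [Matrix.mulVec, dotProduct]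
    _ = ∑ j, (∑ i, W i j) * x j c := by
        rw [Finset.sum_comm]
        exact Finset.sum_congr rfl fun j _ => (Finset.sum_mul _ _ _).symm
    _ = 0 := by simp_rw [hcol]; simpa using hx c

lemma kron_pow_norm_le {n p : ℕ} (W : Matrix (Fin n) (Fin n) ℝ) (hW : W.IsHermitian)
    (hrow : ∀ i, ∑ j, W i j = 1) (hcol : ∀ j, ∑ i, W i j = 1)
    (β : ℝ) (hβ0 : 0 ≤ β)
    (hone : ∃! i, hW.eigenvalues i = 1)
    (hβub : ∀ i, hW.eigenvalues i ≠ 1 → |hW.eigenvalues i| ≤ β)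
    (t : ℕ) (x : CVec n p) (hx : ∀ c, ∑ i, x i c = 0) :
    ‖kron (W ^ t) x‖ ≤ β ^ t * ‖x‖ := by
  induction t generalizing x with
  | zero => simp [pow_zero, kron_one]
  | succ t ih =>
      rw [pow_succ, kron_mul]
      calc ‖kron (W ^ t) (kron W x)‖ ≤ β ^ t * ‖kron W x‖ :=
            ih (kron W x) (kron_sum_zero W hcol x hx)
        _ ≤ β ^ t * (β * ‖x‖) := by
            refine mul_le_mul_of_nonneg_left ?_ (by positivity)
            exact kron_norm_le W hW hrow β hβ0 hone hβub x hx
        _ = β ^ (t + 1) * ‖x‖ := by ring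

lemma pow_row_sum {n : ℕ} (W : Matrix (Fin n) (Fin n) ℝ)
    (hrow : ∀ i, ∑ j, W i j = 1) (t : ℕ) (ht : 1 ≤ t) :
    ∀ i, ∑ j, (W ^ t) i j = 1 := by
  induction t with
  | zero => omega
  | succ t ih =>
      intro i
      by_cases h0 : t = 0
      · subst h0; rw [pow_one]; exact hrow i
      · have ht' : 1 ≤ t := Nat.one_le_iff_ne_zero.2 h0
        rw [pow_succ]
        calc ∑ j, (W ^ t * W) i j = ∑ j, ∑ l, (W ^ t) i l * W l j := by
              simp [Matrix.mul_apply]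
          _ = ∑ l, (W ^ t) i l * ∑ j, W l j := by
              rw [Finset.sum_comm]
              exact Finset.sum_congr rfl fun l _ => (Finset.mul_sum _ _ _).symm
          _ = 1 := by simp_rw [hrow]; simpa using ih ht' i

lemma pow_col_sum {n : ℕ} (W : Matrix (Fin n) (Fin n) ℝ)
    (hcol : ∀ j, ∑ i, W i j = 1) (t : ℕ) (ht : 1 ≤ t) :
    ∀ j, ∑ i, (W ^ t) i j = 1 := by
  induction t with
  | zero => omega
  | succ t ih =>
      intro j
      by_cases h0 : t = 0
      · subst h0; rw [pow_one]; exact hcol j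
      · have ht' : 1 ≤ t := Nat.one_le_iff_ne_zero.2 h0
        rw [pow_succ]
        calc ∑ i, (W ^ t * W) i j = ∑ i, ∑ l, (W ^ t) i l * W l j := by
              simp [Matrix.mul_apply]
          _ = ∑ l, (∑ i, (W ^ t) i l) * W l j := by
              rw [Finset.sum_comm]
              exact Finset.sum_congr rfl fun l _ => (Finset.sum_mul _ _ _).symm
          _ = 1 := by simp_rw [ih ht']; simpa using hcol j

end Aux

/-- if `α ≤ (1 + λₙ(Wᵗ))/L` and `x₀ = 0`, then `‖∇f(x_k)‖ ≤ D` for all `k`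
implies that each agent's DGDᵗ iterate deviates boundedly from the mean:
`‖x_{i,k} − x̄_k‖ ≤ αD/(1 − βᵗ)` for all `k ≥ 1` and all `i`. -/
theorem dgdt_bounded_deviation_from_mean
    (n p t : ℕ) (hn : 1 ≤ n) (hp : 1 ≤ p) (ht : 1 ≤ t)
    -- local objective functions: convex, differentiable, with Lᵢ-Lipschitz gradients
    (f : Fin n → Vec p → ℝ) (Lc : Fin n → ℝ) (L : ℝ)
    (hconv : ∀ i, ConvexOn ℝ Set.univ (f i))
    (hdiff : ∀ i, Differentiable ℝ (f i))
    (hLpos : ∀ i, 0 < Lc i)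
    (hLip : ∀ i, LipschitzWith (Real.toNNReal (Lc i)) (fun z => gradient (f i) z))
    (hLmax : IsGreatest (Set.range Lc) L)
    -- each fᵢ attains its minimum at xsᵢ
    (xs : Fin n → Vec p) (hxs : ∀ i, ∀ z, f i (xs i) ≤ f i z)
    -- W is symmetric, doubly stochastic, with eigenvalues in (−1, 1],
    -- exactly one eigenvalue equal to 1
    (W : Matrix (Fin n) (Fin n) ℝ) (hWsymm : W.IsHermitian)
    (hrow : ∀ i, ∑ j, W i j = 1) (hcol : ∀ j, ∑ i, W i j = 1)
    (hWnn : ∀ i j, 0 ≤ W i j)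
    (heig : ∀ i, hWsymm.eigenvalues i ∈ Set.Ioc (-1 : ℝ) 1)
    (hone : ∃! i, hWsymm.eigenvalues i = 1)
    -- β ∈ (0,1): the second largest magnitude of the eigenvalues of W
    (β : ℝ) (hβmem : β ∈ Set.Ioo (0 : ℝ) 1)
    (hβ : IsGreatest {r : ℝ | ∃ i, hWsymm.eigenvalues i ≠ 1 ∧ r = |hWsymm.eigenvalues i|} β)
    -- λₙ(Wᵗ): the smallest eigenvalue of Wᵗ
    (hWt : (W ^ t).IsHermitian)
    (lam : ℝ) (hlam : IsLeast (Set.range hWt.eigenvalues) lam)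
    -- stepsize condition α ≤ (1 + λₙ(Wᵗ))/L
    (α : ℝ) (hα : 0 < α) (hαle : α ≤ (1 + lam) / L)
    -- DGDᵗ iterates starting from x₀ = 0
    (x : ℕ → CVec n p) (hx0 : x 0 = 0)
    (hiter : ∀ k, x (k + 1) = kron (W ^ t) (x k) - α • gradConcat f (x k))
    -- the gradient bound D and its validity
    (D : ℝ) (hD : D = Real.sqrt (2 * L * ∑ i, (f i 0 - f i (xs i))))
    (hDgrad : ∀ k, ‖gradConcat f (x k)‖ ≤ D)
    -- the mean iterate
    (xbar : ℕ → Vec p) (hxbar : ∀ k, xbar k = (n : ℝ)⁻¹ • ∑ i, x k i) :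
    ∀ k, 1 ≤ k → ∀ i, ‖x k i - xbar k‖ ≤ α * D / (1 - β ^ t) := by
  classical
  have hβ0 : 0 ≤ β := hβmem.1.le
  have hβt1 : β ^ t < 1 := pow_lt_one₀ hβ0 hβmem.2 (by omega)
  have hβt0 : 0 ≤ β ^ t := by positivity
  have hden : 0 < 1 - β ^ t := by linarith
  have hD0 : 0 ≤ D := hD ▸ Real.sqrt_nonneg _
  have hn0 : (n : ℝ) ≠ 0 := by
    have : (0 : ℝ) < n := by exact_mod_cast hn
    linarith
  have hβub : ∀ i, hWsymm.eigenvalues i ≠ 1 → |hWsymm.eigenvalues i| ≤ β :=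
    fun i hi => hβ.2 ⟨i, hi, rfl⟩
  -- notation
  set g : ℕ → CVec n p := fun k => gradConcat f (x k) with hg
  set gb : ℕ → Vec p := fun k => (n : ℝ)⁻¹ • ∑ i, g k i with hgb
  set h : ℕ → CVec n p := fun k => WithLp.toLp 2 (fun i => g k i - gb k) with hh
  set e : ℕ → CVec n p := fun k => WithLp.toLp 2 (fun i => x k i - xbar k) with he
  set M : ℝ := α * D / (1 - β ^ t) with hM
  have hM0 : 0 ≤ M := by positivity
  -- sum of x at k
  have hsumn : ∀ k, ∑ i, x k i = (n : ℝ) • xbar k := by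
    intro k
    rw [hxbar k, smul_smul, mul_inv_cancel₀ hn0, one_smul]
  have hsumg : ∀ k, ∑ i, g k i = (n : ℝ) • gb k := by
    intro k
    rw [hgb, smul_smul, mul_inv_cancel₀ hn0, one_smul]
  -- e has zero blockwise coordinate sums
  have he_sum : ∀ k c, ∑ i, e k i c = 0 := by
    intro k c
    have h1 : ∑ i, e k i = (0 : Vec p) := by
      have : ∑ i, e k i = (∑ i, x k i) - (n : ℝ) • xbar k := by
        rw [he]
        simp only
        rw [Finset.sum_sub_distrib, Finset.sum_const, Finset.card_univ, Fintype.card_fin]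
        congr 1
        rw [← Nat.cast_smul_eq_nsmul ℝ]
      rw [this, hsumn k, sub_self]
    calc ∑ i, e k i c = (∑ i, e k i) c := (sumV_apply _ _ _).symm
      _ = 0 := by rw [h1]; rfl
  -- recursion for the mean
  have hxbar_rec : ∀ k, xbar (k + 1) = xbar k - α • gb k := by
    intro k
    have hsum1 : ∑ i, kron (W ^ t) (x k) i = ∑ j, x k j := by
      calc ∑ i, kron (W ^ t) (x k) i = ∑ i, ∑ j, (W ^ t) i j • x k j := rfl
        _ = ∑ j, (∑ i, (W ^ t) i j) • x k j := by
            rw [Finset.sum_comm]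
            exact Finset.sum_congr rfl fun j _ => (Finset.sum_smul).symm
        _ = ∑ j, x k j := by simp_rw [pow_col_sum W hcol t ht, one_smul]
    have hx1 : ∑ i, x (k + 1) i = (∑ j, x k j) - α • ∑ i, g k i := by
      rw [hiter k]
      calc ∑ i, (kron (W ^ t) (x k) - α • g k) i
          = ∑ i, (kron (W ^ t) (x k) i - α • g k i) := rfl
        _ = (∑ i, kron (W ^ t) (x k) i) - ∑ i, α • g k i := Finset.sum_sub_distrib _ _
        _ = (∑ j, x k j) - α • ∑ i, g k i := by rw [hsum1, Finset.smul_sum]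
    rw [hxbar (k + 1), hx1, smul_sub, ← hxbar k, smul_comm]
  -- recursion for the error
  have he_rec : ∀ k, e (k + 1) = kron (W ^ t) (e k) - α • h k := by
    intro k
    refine PiLp.ext fun i => ?_
    show x (k + 1) i - xbar (k + 1) = kron (W ^ t) (e k) i - α • h k i
    have hke : kron (W ^ t) (e k) i = kron (W ^ t) (x k) i - xbar k := by
      calc kron (W ^ t) (e k) i = ∑ j, (W ^ t) i j • (x k j - xbar k) := rfl
        _ = ∑ j, ((W ^ t) i j • x k j - (W ^ t) i j • xbar k) := by
            simp_rw [smul_sub]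
        _ = (∑ j, (W ^ t) i j • x k j) - ∑ j, (W ^ t) i j • xbar k :=
            Finset.sum_sub_distrib _ _
        _ = (∑ j, (W ^ t) i j • x k j) - (∑ j, (W ^ t) i j) • xbar k := by
            rw [Finset.sum_smul]
        _ = kron (W ^ t) (x k) i - xbar k := by
            rw [pow_row_sum W hrow t ht i, one_smul]; rfl
    have hxk : x (k + 1) i = kron (W ^ t) (x k) i - α • g k i := by
      rw [hiter k]; rfl
    rw [hxk, hxbar_rec k, hke]
    show _ = _ - α • (g k i - gb k)
    rw [smul_sub]
    abel
  -- bound on h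
  have hh_le : ∀ k, ‖h k‖ ≤ D := by
    intro k
    have hsq : ‖h k‖ ^ 2 ≤ ‖g k‖ ^ 2 := by
      rw [PiLp.norm_sq_eq_of_L2, PiLp.norm_sq_eq_of_L2]
      have hpt : ∀ i : Fin n, ‖h k i‖ ^ 2
          = ‖g k i‖ ^ 2 - 2 * (inner ℝ (g k i) (gb k) : ℝ) + ‖gb k‖ ^ 2 := by
        intro i
        exact norm_sub_sq_real (g k i) (gb k)
      have hinner : ∑ i, (inner ℝ (g k i) (gb k) : ℝ) = (n : ℝ) * ‖gb k‖ ^ 2 := by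
        rw [← sum_inner, hsumg k, real_inner_smul_left, real_inner_self_eq_norm_sq]
      calc ∑ i, ‖h k i‖ ^ 2
          = ∑ i, (‖g k i‖ ^ 2 - 2 * (inner ℝ (g k i) (gb k) : ℝ) + ‖gb k‖ ^ 2) :=
            Finset.sum_congr rfl fun i _ => hpt i
        _ = (∑ i, ‖g k i‖ ^ 2) - 2 * ((n : ℝ) * ‖gb k‖ ^ 2) + (n : ℝ) * ‖gb k‖ ^ 2 := by
            rw [Finset.sum_add_distrib, Finset.sum_sub_distrib, ← Finset.mul_sum, hinner]
            simp [Finset.card_univ, mul_comm]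
        _ ≤ ∑ i, ‖g k i‖ ^ 2 := by
            have : (0 : ℝ) ≤ (n : ℝ) * ‖gb k‖ ^ 2 := by positivity
            linarith
    have h2 : ‖h k‖ ≤ ‖g k‖ := by
      nlinarith [norm_nonneg (h k), norm_nonneg (g k)]
    exact h2.trans (hDgrad k)
  -- main induction
  have claim : ∀ k, ‖e k‖ ≤ M := by
    intro k
    induction k with
    | zero =>
        have he0 : e 0 = 0 := by
          refine PiLp.ext fun i => ?_
          show x 0 i - xbar 0 = 0
          rw [hx0, hxbar 0, hx0]
          simp
        rw [he0, norm_zero]; exact hM0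
    | succ k ih =>
        rw [he_rec k]
        have h1 : ‖kron (W ^ t) (e k) - α • h k‖
            ≤ ‖kron (W ^ t) (e k)‖ + ‖α • h k‖ := norm_sub_le _ _
        have h2 : ‖kron (W ^ t) (e k)‖ ≤ β ^ t * ‖e k‖ :=
          kron_pow_norm_le W hWsymm hrow hcol β hβ0 hone hβub t (e k) (he_sum k)
        have h3 : ‖α • h k‖ ≤ α * D := by
          rw [norm_smul, Real.norm_eq_abs, abs_of_pos hα]
          exact mul_le_mul_of_nonneg_left (hh_le k) hα.le
        have h4 : β ^ t * ‖e k‖ ≤ β ^ t * M :=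
          mul_le_mul_of_nonneg_left ih hβt0
        have hMe : α * D = M * (1 - β ^ t) := by
          rw [hM]; field_simp
        calc ‖kron (W ^ t) (e k) - α • h k‖
            ≤ ‖kron (W ^ t) (e k)‖ + ‖α • h k‖ := h1
          _ ≤ β ^ t * M + α * D := add_le_add (h2.trans h4) h3
          _ = M := by rw [hMe]; ring
  intro k hk i
  exact (coord_le_norm (e k) i).trans (claim k)
end
end
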